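/- Let d ≥ 1 and m ≥ 0 be integers. For N ≥ 1 and multi-indices i ∈ {1,…,N}^d, set λ_i = Σ_{j=1}^d 4 sin²( π (i_j − 1) / (2N) ) (these are the eigenvalues of the Laplacian of the d-dimensional grid graph with n = N^d vertices). There exists a constant c > 0 depending only on m and d such that for every N ≥ 1 and every r₀ ∈ [1, √d · N]: Σ_{ i ∈ {1,…,N}^d : ‖i − 1‖₂ ≥ r₀ } λ_i^{−m} ≤ c n if 2m < d; ≤ c n log( 2√d · N / r₀ ) if 2m = d; and ≤ c N^{2m} r₀^{d−2m} if 2m > d, where 1 denotes the all-ones multi-index. -/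

import Mathlib

set_option maxHeartbeats 1000000


open scoped BigOperators ENNReal NNReal

noncomputable section

/-- Harmonic tail: telescoping `1/t ≤ log t - log (t-1)`. -/
lemma harm_log (k : ℕ) (hk : 1 ≤ k) (M : ℕ) (hM : k ≤ M) :
    ∑ t ∈ Finset.Ico (k + 1) (M + 1), ((t : ℝ))⁻¹ ≤ Real.log M - Real.log k := by
  induction M, hM using Nat.le_induction with
  | base => simp
  | succ M hM ih =>
    rw [Finset.sum_Ico_succ_top (by omega)]
    have hM0 : (0:ℝ) < M := by exact_mod_cast (by omega : 0 < M)
    have h1 : ((M:ℝ) + 1)⁻¹ ≤ Real.log (M + 1) - Real.log M := by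
      have h := Real.log_le_sub_one_of_pos (x := (M:ℝ) / (M + 1)) (by positivity)
      rw [Real.log_div (by positivity) (by positivity)] at h
      have : (M:ℝ) / (M + 1) - 1 = -((M:ℝ)+1)⁻¹ := by field_simp; ring
      rw [this] at h
      linarith
    push_cast
    push_cast at ih
    linarith

/-- Tail of `∑ 1/t²`. -/
lemma sq_inv_tail (k : ℕ) (hk : 1 ≤ k) (M : ℕ) (hM : k ≤ M) :
    ∑ t ∈ Finset.Ico (k + 1) (M + 1), ((t : ℝ) ^ 2)⁻¹ ≤ ((k : ℝ))⁻¹ - ((M : ℝ))⁻¹ := by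
  induction M, hM using Nat.le_induction with
  | base => simp
  | succ M hM ih =>
    rw [Finset.sum_Ico_succ_top (by omega)]
    have hM0 : (0:ℝ) < M := by exact_mod_cast (by omega : 0 < M)
    have h1 : (((M:ℝ) + 1) ^ 2)⁻¹ ≤ (M:ℝ)⁻¹ - ((M:ℝ) + 1)⁻¹ := by
      rw [show (M:ℝ)⁻¹ - ((M:ℝ)+1)⁻¹ = ((M:ℝ) * ((M:ℝ)+1))⁻¹ by field_simp; ring]
      apply inv_anti₀ (by positivity)
      nlinarith
    push_cast
    push_cast at ih
    linarith

lemma card_le_fixed (N t : ℕ) :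
    (Finset.univ.filter (fun x : Fin N => (x : ℕ) = t)).card ≤ 1 := by
  apply Finset.card_le_one.mpr
  intro a ha b hb
  simp only [Finset.mem_filter] at ha hb
  exact Fin.ext (ha.2.trans hb.2.symm)

lemma card_le_bounded (N t : ℕ) :
    (Finset.univ.filter (fun x : Fin N => (x : ℕ) ≤ t)).card ≤ t + 1 := by
  have : (Finset.univ.filter (fun x : Fin N => (x : ℕ) ≤ t)).card
      ≤ (Finset.range (t + 1)).card := by
    refine Finset.card_le_card_of_injOn (fun x => (x : ℕ)) (fun x hx => ?_)
      (fun a _ b _ h => Fin.ext h)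
    simp only [Finset.mem_coe, Finset.mem_filter] at hx
    simp [Nat.lt_succ_iff, hx.2]
  simpa using this

lemma shell_card (d N t : ℕ) (hd : 1 ≤ d) :
    (Finset.univ.filter (fun i : Fin d → Fin N =>
        Finset.univ.sup (fun j => (i j : ℕ)) = t)).card ≤ d * (t + 1) ^ (d - 1) := by
  classical
  have : Nonempty (Fin d) := Fin.pos_iff_nonempty.mp (by omega)
  have hne : (Finset.univ : Finset (Fin d)).Nonempty := Finset.univ_nonempty
  set B : Fin d → Finset (Fin d → Fin N) := fun j =>
    Finset.univ.filter (fun i => (i j : ℕ) = t ∧ ∀ j', (i j' : ℕ) ≤ t) with hB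
  have hsub : (Finset.univ.filter (fun i : Fin d → Fin N =>
      Finset.univ.sup (fun j => (i j : ℕ)) = t)) ⊆ Finset.univ.biUnion B := by
    intro i hi
    simp only [Finset.mem_filter, Finset.mem_univ, true_and] at hi
    obtain ⟨j₀, _, hj₀⟩ := Finset.exists_mem_eq_sup Finset.univ hne (fun j => (i j : ℕ))
    rw [Finset.mem_biUnion]
    refine ⟨j₀, Finset.mem_univ _, ?_⟩
    simp only [hB, Finset.mem_filter, Finset.mem_univ, true_and]
    refine ⟨by rw [← hj₀, hi], fun j' => ?_⟩
    rw [← hi]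
    exact Finset.le_sup (f := fun j => (i j : ℕ)) (Finset.mem_univ j')
  calc _ ≤ (Finset.univ.biUnion B).card := Finset.card_le_card hsub
    _ ≤ ∑ j, (B j).card := Finset.card_biUnion_le
    _ ≤ ∑ _j : Fin d, (t + 1) ^ (d - 1) := by
        apply Finset.sum_le_sum
        intro j _
        have hsub2 : B j ⊆ Fintype.piFinset (fun j' : Fin d =>
            if j' = j then Finset.univ.filter (fun x : Fin N => (x : ℕ) = t)
            else Finset.univ.filter (fun x : Fin N => (x : ℕ) ≤ t)) := by
          intro i hi
          simp only [hB, Finset.mem_filter, Finset.mem_univ, true_and] at hi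
          rw [Fintype.mem_piFinset]
          intro j'
          by_cases h : j' = j
          · simp [h, hi.1]
          · simp [h, hi.2 j']
        calc (B j).card ≤ _ := Finset.card_le_card hsub2
          _ = ∏ j' : Fin d, (if j' = j then
                (Finset.univ.filter (fun x : Fin N => (x : ℕ) = t)).card
              else (Finset.univ.filter (fun x : Fin N => (x : ℕ) ≤ t)).card) := by
            rw [Fintype.card_piFinset]
            exact Finset.prod_congr rfl (fun j' _ => by split <;> rfl)
          _ ≤ ∏ j' : Fin d, (if j' = j then 1 else (t + 1)) := by
            apply Finset.prod_le_prod'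
            intro j' _
            split
            · exact card_le_fixed N t
            · exact card_le_bounded N t
          _ = (t + 1) ^ (d - 1) := by
            rw [← Finset.mul_prod_erase Finset.univ _ (Finset.mem_univ j)]
            simp only [if_pos rfl, one_mul]
            rw [Finset.prod_ite_of_false]
            · rw [Finset.prod_const, Finset.card_erase_of_mem (Finset.mem_univ j)]
              simp
            · intro j' hj'
              exact Finset.ne_of_mem_erase hj'
    _ = d * (t + 1) ^ (d - 1) := by simp [mul_comm]

lemma eig_term_lower (N : ℕ) (hN : 1 ≤ N) (k : Fin N) :
    ((k : ℕ) : ℝ) ^ 2 / (N : ℝ) ^ 2 ≤ 4 * Real.sin (Real.pi * (k : ℕ) / (2 * N)) ^ 2 := by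
  have hN0 : (0:ℝ) < N := by exact_mod_cast hN
  have hx0 : (0:ℝ) ≤ Real.pi * (k : ℕ) / (2 * N) := by positivity
  have hx1 : Real.pi * (k : ℕ) / (2 * N) ≤ Real.pi / 2 := by
    rw [div_le_div_iff₀ (by positivity) (by norm_num)]
    have hk : ((k : ℕ) : ℝ) ≤ N := by
      have := k.isLt; exact_mod_cast this.le
    nlinarith [Real.pi_pos]
  have hsin := Real.mul_le_sin hx0 hx1
  have heq : 2 / Real.pi * (Real.pi * (k : ℕ) / (2 * N)) = (k : ℕ) / N := by
    field_simp
  rw [heq] at hsin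
  have h0 : (0:ℝ) ≤ ((k:ℕ):ℝ) / N := by positivity
  have hsq : (((k:ℕ):ℝ) / N) ^ 2 ≤ Real.sin (Real.pi * (k : ℕ) / (2 * N)) ^ 2 :=
    pow_le_pow_left₀ h0 hsin 2
  rw [div_pow] at hsq
  nlinarith [sq_nonneg (Real.sin (Real.pi * (k : ℕ) / (2 * N)))]

open scoped BigOperators ENNReal NNReal


/-- Lemma: partial sums of inverse powers of grid-Laplacian
eigenvalues.  For the `d`-dimensional grid graph on `n = N^d` vertices, the Laplacian
eigenvalues are `λ_i = Σ_{j=1}^d 4 sin²(π(i_j-1)/(2N))` for multi-indices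
`i ∈ {1,…,N}^d` (here `0`-indexed by `Fin N`).  There is a constant `c > 0` depending
only on `m` and `d` such that for every `N ≥ 1` and every `r₀ ∈ [1, √d·N]`, the sum of
`λ_i^{-m}` over `{i : ‖i - 1‖₂ ≥ r₀}` is at most `c n` if `2m < d`, at most
`c n log(2√d·N/r₀)` if `2m = d`, and at most `c N^{2m} r₀^{d-2m}` if `2m > d`. -/
theorem grid_laplacian_inverse_eigenvalue_sums (d m : ℕ) (hd : 1 ≤ d) :
    ∃ c : ℝ, 0 < c ∧ ∀ N : ℕ, 1 ≤ N → ∀ r₀ : ℝ, 1 ≤ r₀ → r₀ ≤ Real.sqrt d * N →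
      ((2 * m < d →
        ∑ i ∈ Finset.univ.filter (fun i : Fin d → Fin N =>
              r₀ ≤ Real.sqrt (∑ j, ((i j : ℕ) : ℝ) ^ 2)),
            ((∑ j, 4 * Real.sin (Real.pi * (i j : ℕ) / (2 * N)) ^ 2) ^ m)⁻¹ ≤
          c * (N ^ d : ℕ)) ∧
      (2 * m = d →
        ∑ i ∈ Finset.univ.filter (fun i : Fin d → Fin N =>
              r₀ ≤ Real.sqrt (∑ j, ((i j : ℕ) : ℝ) ^ 2)),
            ((∑ j, 4 * Real.sin (Real.pi * (i j : ℕ) / (2 * N)) ^ 2) ^ m)⁻¹ ≤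
          c * (N ^ d : ℕ) * Real.log (2 * Real.sqrt d * N / r₀)) ∧
      (d < 2 * m →
        ∑ i ∈ Finset.univ.filter (fun i : Fin d → Fin N =>
              r₀ ≤ Real.sqrt (∑ j, ((i j : ℕ) : ℝ) ^ 2)),
            ((∑ j, 4 * Real.sin (Real.pi * (i j : ℕ) / (2 * N)) ^ 2) ^ m)⁻¹ ≤
          c * (N : ℝ) ^ (2 * m) * r₀ ^ ((d : ℝ) - 2 * m))) := by
  classical
  set c1 : ℝ := (d : ℝ) * 2 ^ (d - 1) with hc1
  set c2 : ℝ := (d : ℝ) * 2 ^ (d - 1) * (1 + 1 / Real.log 2) with hc2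
  set c3 : ℝ := (d : ℝ) * 2 ^ (d - 1) * 2 * (Real.sqrt d) ^ (2 * m) with hc3
  have hd0 : (0:ℝ) < d := by exact_mod_cast hd
  haveI : Nonempty (Fin d) := Fin.pos_iff_nonempty.mp (by omega)
  have hlog2 : (0:ℝ) < Real.log 2 := Real.log_pos (by norm_num)
  have hsd1 : (1:ℝ) ≤ Real.sqrt d := by
    rw [show (1:ℝ) = Real.sqrt 1 by simp]
    exact Real.sqrt_le_sqrt (by exact_mod_cast hd)
  have hsd0 : (0:ℝ) < Real.sqrt d := by linarith
  have hc1p : 0 < c1 := by positivity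
  have hc2p : 0 < c2 := by positivity
  have hc3p : 0 < c3 := by positivity
  refine ⟨max c1 (max c2 c3), lt_max_of_lt_left hc1p, ?_⟩
  intro N hN r₀ hr1 hr2
  have hN0 : (0:ℝ) < N := by exact_mod_cast hN
  set A := Finset.univ.filter (fun i : Fin d → Fin N =>
      r₀ ≤ Real.sqrt (∑ j, ((i j : ℕ) : ℝ) ^ 2)) with hA
  set S : (Fin d → Fin N) → ℝ := fun i => ∑ j, ((i j : ℕ) : ℝ) ^ 2 with hS
  set Msup : (Fin d → Fin N) → ℕ := fun i => Finset.univ.sup (fun j => (i j : ℕ)) with hM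
  set bfun : ℕ → ℝ := fun t =>
    if 1 ≤ t ∧ r₀ ≤ Real.sqrt d * t then (d : ℝ) * (t + 1) ^ (d - 1) * ((t : ℝ) ^ (2 * m))⁻¹
    else 0 with hbfun
  -- Step 1: pointwise eigenvalue bound
  have key1 : ∀ i ∈ A, ((∑ j, 4 * Real.sin (Real.pi * (i j : ℕ) / (2 * N)) ^ 2) ^ m)⁻¹
      ≤ (N : ℝ) ^ (2 * m) * ((S i) ^ m)⁻¹ := by
    intro i hi
    have hiA : r₀ ≤ Real.sqrt (S i) := by
      simp only [hA, Finset.mem_filter] at hi; exact hi.2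
    have hS1 : (1:ℝ) ≤ S i := by
      have h0 : (0:ℝ) ≤ S i := Finset.sum_nonneg fun j _ => by positivity
      nlinarith [Real.sq_sqrt h0, Real.sqrt_nonneg (S i)]
    have hSpos : (0:ℝ) < S i := by linarith
    have hlow : S i / (N : ℝ) ^ 2 ≤ ∑ j, 4 * Real.sin (Real.pi * (i j : ℕ) / (2 * N)) ^ 2 := by
      rw [hS, Finset.sum_div]
      exact Finset.sum_le_sum fun j _ => eig_term_lower N hN (i j)
    have hlowm : (S i) ^ m / (N : ℝ) ^ (2 * m)
        ≤ (∑ j, 4 * Real.sin (Real.pi * (i j : ℕ) / (2 * N)) ^ 2) ^ m := by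
      have := pow_le_pow_left₀ (by positivity) hlow m
      rwa [div_pow, ← pow_mul] at this
    have hpos : (0:ℝ) < (S i) ^ m / (N : ℝ) ^ (2 * m) := by positivity
    calc ((∑ j, 4 * Real.sin (Real.pi * (i j : ℕ) / (2 * N)) ^ 2) ^ m)⁻¹
        ≤ ((S i) ^ m / (N : ℝ) ^ (2 * m))⁻¹ := inv_anti₀ hpos hlowm
      _ = (N : ℝ) ^ (2 * m) * ((S i) ^ m)⁻¹ := by
          rw [div_eq_mul_inv, mul_inv, inv_inv]; ring
  -- Step 2: fiberwise counting bound
  have key2 : ∑ i ∈ A, ((S i) ^ m)⁻¹ ≤ ∑ t ∈ Finset.range N, bfun t := by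
    have hmaps : ∀ i ∈ A, Msup i ∈ Finset.range N := by
      intro i _
      rw [Finset.mem_range, hM]
      exact (Finset.sup_lt_iff (by simpa [bot_eq_zero] using (show 0 < N by omega))).mpr fun j _ => (i j).isLt
    rw [← Finset.sum_fiberwise_of_maps_to hmaps]
    apply Finset.sum_le_sum
    intro t _
    by_cases hc : 1 ≤ t ∧ r₀ ≤ Real.sqrt d * t
    · -- nonempty fiber case: card * pointwise bound
      have ht0 : (0:ℝ) < (t:ℝ) := by exact_mod_cast hc.1
      have hterm : ∀ i ∈ A.filter (fun i => Msup i = t),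
          ((S i) ^ m)⁻¹ ≤ ((t : ℝ) ^ (2 * m))⁻¹ := by
        intro i hi
        simp only [Finset.mem_filter] at hi
        obtain ⟨j₀, _, hj₀⟩ := Finset.exists_mem_eq_sup Finset.univ
          (Finset.univ_nonempty (α := Fin d)) (fun j => (i j : ℕ))
        have hSt : ((t:ℝ)) ^ 2 ≤ S i := by
          have h1 : ((i j₀ : ℕ) : ℝ) ^ 2 ≤ S i :=
            Finset.single_le_sum (f := fun j => ((i j : ℕ) : ℝ) ^ 2)
              (fun j _ => by positivity) (Finset.mem_univ j₀)
          have hit : (i j₀ : ℕ) = t := by rw [← hj₀]; exact hi.2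
          rwa [hit] at h1
        have hmono : (t:ℝ) ^ (2 * m) ≤ (S i) ^ m := by
          have := pow_le_pow_left₀ (by positivity) hSt m
          rwa [← pow_mul] at this
        exact inv_anti₀ (by positivity) hmono
      calc ∑ i ∈ A.filter (fun i => Msup i = t), ((S i) ^ m)⁻¹
          ≤ (A.filter (fun i => Msup i = t)).card • ((t : ℝ) ^ (2 * m))⁻¹ :=
            Finset.sum_le_card_nsmul _ _ _ hterm
        _ = ((A.filter (fun i => Msup i = t)).card : ℝ) * ((t : ℝ) ^ (2 * m))⁻¹ := by
            rw [nsmul_eq_mul]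
        _ ≤ ((d * (t + 1) ^ (d - 1) : ℕ) : ℝ) * ((t : ℝ) ^ (2 * m))⁻¹ := by
            apply mul_le_mul_of_nonneg_right _ (by positivity)
            have hsub : A.filter (fun i => Msup i = t) ⊆
                Finset.univ.filter (fun i : Fin d → Fin N =>
                  Finset.univ.sup (fun j => (i j : ℕ)) = t) := by
              intro i hi
              simp only [Finset.mem_filter] at hi ⊢
              exact ⟨Finset.mem_univ _, hi.2⟩
            exact_mod_cast Finset.card_le_card hsub |>.trans (shell_card d N t hd)
        _ = bfun t := by
            rw [hbfun]; simp only [if_pos hc]; push_cast; ring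
    · -- empty fiber
      have hempty : A.filter (fun i => Msup i = t) = ∅ := by
        rw [Finset.filter_eq_empty_iff]
        intro i hi hMt
        simp only [hA, Finset.mem_filter] at hi
        have hSle : ∀ j, ((i j : ℕ) : ℝ) ^ 2 ≤ (t:ℝ) ^ 2 := by
          intro j
          have h1 : (i j : ℕ) ≤ t := by
            rw [← hMt, hM]; exact Finset.le_sup (f := fun j => ((i j : ℕ))) (Finset.mem_univ j)
          have h2 : ((i j : ℕ) : ℝ) ≤ (t : ℝ) := by exact_mod_cast h1
          exact pow_le_pow_left₀ (by positivity) h2 2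
        apply hc
        constructor
        · by_contra h0
          have ht : t = 0 := by omega
          have : S i = 0 := by
            rw [hS]
            apply Finset.sum_eq_zero
            intro j _
            have := hSle j
            rw [ht] at this
            push_cast at this
            nlinarith [sq_nonneg ((i j : ℕ) : ℝ)]
          have hr : r₀ ≤ Real.sqrt (S i) := hi.2
          rw [this, Real.sqrt_zero] at hr
          linarith
        · have hSub : S i ≤ (d : ℝ) * (t:ℝ) ^ 2 := by
            rw [hS]
            calc ∑ j, ((i j : ℕ) : ℝ) ^ 2 ≤ ∑ _j : Fin d, (t:ℝ) ^ 2 :=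
                  Finset.sum_le_sum fun j _ => hSle j
              _ = (d : ℝ) * (t:ℝ) ^ 2 := by simp [mul_comm]
          have : Real.sqrt (S i) ≤ Real.sqrt d * t := by
            rw [show Real.sqrt d * t = Real.sqrt ((d : ℝ) * (t:ℝ)^2) by
              rw [Real.sqrt_mul (by positivity), Real.sqrt_sq (by positivity)]]
            exact Real.sqrt_le_sqrt hSub
          have hr : r₀ ≤ Real.sqrt (S i) := hi.2
          linarith
      rw [hempty, hbfun]
      simp [hc]
  -- combine
  have key : ∑ i ∈ A, ((∑ j, 4 * Real.sin (Real.pi * (i j : ℕ) / (2 * N)) ^ 2) ^ m)⁻¹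
      ≤ (N : ℝ) ^ (2 * m) * ∑ t ∈ Finset.range N, bfun t := by
    calc ∑ i ∈ A, ((∑ j, 4 * Real.sin (Real.pi * (i j : ℕ) / (2 * N)) ^ 2) ^ m)⁻¹
        ≤ ∑ i ∈ A, (N : ℝ) ^ (2 * m) * ((S i) ^ m)⁻¹ := Finset.sum_le_sum key1
      _ = (N : ℝ) ^ (2 * m) * ∑ i ∈ A, ((S i) ^ m)⁻¹ := by rw [Finset.mul_sum]
      _ ≤ (N : ℝ) ^ (2 * m) * ∑ t ∈ Finset.range N, bfun t := by
          apply mul_le_mul_of_nonneg_left key2 (by positivity)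
  -- common cutoff index
  set k : ℕ := max 1 ⌈r₀ / Real.sqrt d⌉₊ with hkdef
  have hk1 : 1 ≤ k := le_max_left _ _
  have hr₀pos : (0:ℝ) < r₀ := by linarith
  have hkr : r₀ / Real.sqrt d ≤ (k : ℝ) := by
    calc r₀ / Real.sqrt d ≤ (⌈r₀ / Real.sqrt d⌉₊ : ℝ) := Nat.le_ceil _
      _ ≤ (k : ℝ) := by exact_mod_cast le_max_right _ _
  have hkpos : (0:ℝ) < k := by exact_mod_cast hk1
  have hk1R : (1:ℝ) ≤ k := by exact_mod_cast hk1
  have hkN : k ≤ N := by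
    apply max_le hN
    rw [Nat.ceil_le, div_le_iff₀ hsd0]
    rw [mul_comm] at hr2
    exact hr2
  have hsubIco : (Finset.range N).filter (fun t : ℕ => 1 ≤ t ∧ r₀ ≤ Real.sqrt d * (t:ℝ))
      ⊆ Finset.Ico k N := by
    intro t ht
    simp only [Finset.mem_filter, Finset.mem_range] at ht
    rw [Finset.mem_Ico]
    refine ⟨max_le ht.2.1 ?_, ht.1⟩
    rw [Nat.ceil_le, div_le_iff₀ hsd0, mul_comm]
    exact ht.2.2
  have hsum_if : ∀ g : ℕ → ℝ, (∀ t, 0 ≤ g t) →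
      ∑ t ∈ Finset.range N, (if 1 ≤ t ∧ r₀ ≤ Real.sqrt d * t then g t else 0)
        ≤ ∑ t ∈ Finset.Ico k N, g t := by
    intro g hg
    rw [← Finset.sum_filter]
    exact Finset.sum_le_sum_of_subset_of_nonneg hsubIco (fun t _ _ => hg t)
  have hharm : ∑ t ∈ Finset.Ico k N, ((t : ℝ))⁻¹ ≤ 1 + Real.log N - Real.log k := by
    rcases eq_or_lt_of_le hkN with h | h
    · rw [h, Finset.Ico_self, Finset.sum_empty]
      have h0 : (0:ℝ) ≤ Real.log N := Real.log_natCast_nonneg N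
      linarith
    · rw [Finset.sum_eq_sum_Ico_succ_bot h]
      have h2 := harm_log k hk1 (N - 1) (by omega)
      rw [show N - 1 + 1 = N by omega] at h2
      have h3 : Real.log ((N - 1 : ℕ) : ℝ) ≤ Real.log N := by
        rcases Nat.eq_zero_or_pos (N - 1) with h0 | h0
        · rw [h0]; simp [Real.log_natCast_nonneg N]
        · exact Real.log_le_log (by exact_mod_cast h0) (by exact_mod_cast Nat.sub_le N 1)
      have h4 : (k:ℝ)⁻¹ ≤ 1 := by
        rw [inv_le_one_iff₀]; right; exact hk1R
      linarith
  have hsqsum : ∑ t ∈ Finset.Ico k N, ((t : ℝ) ^ 2)⁻¹ ≤ 2 * ((k : ℝ))⁻¹ := by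
    rcases eq_or_lt_of_le hkN with h | h
    · rw [h, Finset.Ico_self, Finset.sum_empty]
      positivity
    · rw [Finset.sum_eq_sum_Ico_succ_bot h]
      have h2 := sq_inv_tail k hk1 (N - 1) (by omega)
      rw [show N - 1 + 1 = N by omega] at h2
      have h3 : ((k:ℝ) ^ 2)⁻¹ ≤ (k:ℝ)⁻¹ := by
        apply inv_anti₀ hkpos
        nlinarith
      have h4 : (0:ℝ) ≤ (((N - 1 : ℕ)) : ℝ)⁻¹ := by positivity
      linarith
  refine ⟨?_, ?_, ?_⟩
  · -- Case 2m < d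
    intro hcase
    have hbb : ∀ t ∈ Finset.range N, bfun t ≤ (d:ℝ) * 2 ^ (d-1) * (N:ℝ) ^ (d - 1 - 2*m) := by
      intro t htr
      rw [Finset.mem_range] at htr
      rw [hbfun]
      simp only
      split_ifs with hcnd
      · have ht1 : (1:ℝ) ≤ (t:ℝ) := by exact_mod_cast hcnd.1
        have htN : (t:ℝ) ≤ (N:ℝ) := by exact_mod_cast htr.le
        have ht0 : (0:ℝ) < (t:ℝ) := by linarith
        have e1 : ((t:ℝ) + 1) ^ (d-1) ≤ 2 ^ (d-1) * (t:ℝ) ^ (d-1) := by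
          rw [← mul_pow]
          exact pow_le_pow_left₀ (by positivity) (by linarith) _
        have e2 : (t:ℝ) ^ (d-1) * (((t:ℝ)) ^ (2*m))⁻¹ = (t:ℝ) ^ (d - 1 - 2*m) := by
          rw [show d - 1 = (d - 1 - 2*m) + 2*m by omega, pow_add]
          field_simp
          rw [Nat.add_sub_cancel]
        have e3 : (t:ℝ) ^ (d - 1 - 2*m) ≤ (N:ℝ) ^ (d - 1 - 2*m) :=
          pow_le_pow_left₀ (by positivity) htN _
        calc (d:ℝ) * ((t:ℝ) + 1) ^ (d-1) * (((t:ℝ)) ^ (2*m))⁻¹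
            ≤ (d:ℝ) * (2 ^ (d-1) * (t:ℝ) ^ (d-1)) * (((t:ℝ)) ^ (2*m))⁻¹ := by
              apply mul_le_mul_of_nonneg_right
                (mul_le_mul_of_nonneg_left e1 (by positivity)) (by positivity)
          _ = (d:ℝ) * 2 ^ (d-1) * ((t:ℝ) ^ (d-1) * (((t:ℝ)) ^ (2*m))⁻¹) := by ring
          _ = (d:ℝ) * 2 ^ (d-1) * (t:ℝ) ^ (d - 1 - 2*m) := by rw [e2]
          _ ≤ (d:ℝ) * 2 ^ (d-1) * (N:ℝ) ^ (d - 1 - 2*m) :=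
              mul_le_mul_of_nonneg_left e3 (by positivity)
      · positivity
    have hsumb : ∑ t ∈ Finset.range N, bfun t
        ≤ (N:ℝ) * ((d:ℝ) * 2 ^ (d-1) * (N:ℝ) ^ (d - 1 - 2*m)) := by
      calc ∑ t ∈ Finset.range N, bfun t
          ≤ ∑ _t ∈ Finset.range N, (d:ℝ) * 2 ^ (d-1) * (N:ℝ) ^ (d - 1 - 2*m) :=
            Finset.sum_le_sum hbb
        _ = (N:ℝ) * ((d:ℝ) * 2 ^ (d-1) * (N:ℝ) ^ (d - 1 - 2*m)) := by
            rw [Finset.sum_const, Finset.card_range, nsmul_eq_mul]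
    rw [Nat.cast_pow]
    calc ∑ i ∈ A, ((∑ j, 4 * Real.sin (Real.pi * (i j : ℕ) / (2 * N)) ^ 2) ^ m)⁻¹
        ≤ (N : ℝ) ^ (2*m) * ∑ t ∈ Finset.range N, bfun t := key
      _ ≤ (N : ℝ) ^ (2*m) * ((N:ℝ) * ((d:ℝ) * 2 ^ (d-1) * (N:ℝ) ^ (d - 1 - 2*m))) :=
          mul_le_mul_of_nonneg_left hsumb (by positivity)
      _ = c1 * (N:ℝ) ^ d := by
          have hNpow : (N:ℝ) ^ (2*m) * ((N:ℝ) * (N:ℝ) ^ (d - 1 - 2*m)) = (N:ℝ) ^ d := by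
            rw [← pow_succ', ← pow_add]
            congr 1
            omega
          rw [hc1, ← hNpow]
          ring
      _ ≤ max c1 (max c2 c3) * (N:ℝ) ^ d :=
          mul_le_mul_of_nonneg_right (le_max_left _ _) (by positivity)
  · -- Case 2m = d
    intro hcase
    have hX : (0:ℝ) ≤ Real.log (Real.sqrt d * N / r₀) :=
      Real.log_nonneg (by rw [le_div_iff₀ hr₀pos]; linarith)
    have hLeq : Real.log (2 * Real.sqrt d * N / r₀)
        = Real.log 2 + Real.log (Real.sqrt d * N / r₀) := by
      rw [show 2 * Real.sqrt d * (N:ℝ) / r₀ = 2 * (Real.sqrt d * N / r₀) by ring,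
        Real.log_mul (by norm_num) (by positivity)]
    have hLpos : (0:ℝ) < Real.log (2 * Real.sqrt d * N / r₀) := by
      rw [hLeq]; linarith
    have hbb : ∀ t ∈ Finset.range N, bfun t ≤ (d:ℝ) * 2 ^ (d-1) *
        (if 1 ≤ t ∧ r₀ ≤ Real.sqrt d * t then ((t:ℝ))⁻¹ else 0) := by
      intro t _
      rw [hbfun]
      simp only
      split_ifs with hcnd
      · have ht1 : (1:ℝ) ≤ (t:ℝ) := by exact_mod_cast hcnd.1
        have ht0 : (0:ℝ) < (t:ℝ) := by linarith
        have e1 : ((t:ℝ) + 1) ^ (d-1) ≤ 2 ^ (d-1) * (t:ℝ) ^ (d-1) := by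
          rw [← mul_pow]
          exact pow_le_pow_left₀ (by positivity) (by linarith) _
        have e2 : (t:ℝ) ^ (d-1) * (((t:ℝ)) ^ (2*m))⁻¹ = ((t:ℝ))⁻¹ := by
          rw [show 2*m = (d-1) + 1 by omega, pow_add, pow_one, mul_inv]
          rw [← mul_assoc, mul_inv_cancel₀ (by positivity), one_mul]
        calc (d:ℝ) * ((t:ℝ) + 1) ^ (d-1) * (((t:ℝ)) ^ (2*m))⁻¹
            ≤ (d:ℝ) * (2 ^ (d-1) * (t:ℝ) ^ (d-1)) * (((t:ℝ)) ^ (2*m))⁻¹ := by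
              apply mul_le_mul_of_nonneg_right
                (mul_le_mul_of_nonneg_left e1 (by positivity)) (by positivity)
          _ = (d:ℝ) * 2 ^ (d-1) * ((t:ℝ) ^ (d-1) * (((t:ℝ)) ^ (2*m))⁻¹) := by ring
          _ = (d:ℝ) * 2 ^ (d-1) * ((t:ℝ))⁻¹ := by rw [e2]
      · simp
    have hsumb : ∑ t ∈ Finset.range N, bfun t
        ≤ (d:ℝ) * 2 ^ (d-1) * (1 + Real.log N - Real.log k) := by
      calc ∑ t ∈ Finset.range N, bfun t
          ≤ ∑ t ∈ Finset.range N, (d:ℝ) * 2 ^ (d-1) *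
              (if 1 ≤ t ∧ r₀ ≤ Real.sqrt d * t then ((t:ℝ))⁻¹ else 0) :=
            Finset.sum_le_sum hbb
        _ = (d:ℝ) * 2 ^ (d-1) * ∑ t ∈ Finset.range N,
              (if 1 ≤ t ∧ r₀ ≤ Real.sqrt d * t then ((t:ℝ))⁻¹ else 0) := by
            rw [Finset.mul_sum]
        _ ≤ (d:ℝ) * 2 ^ (d-1) * ∑ t ∈ Finset.Ico k N, ((t:ℝ))⁻¹ := by
            apply mul_le_mul_of_nonneg_left _ (by positivity)
            apply hsum_if
            intro t; positivity
        _ ≤ (d:ℝ) * 2 ^ (d-1) * (1 + Real.log N - Real.log k) := by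
            apply mul_le_mul_of_nonneg_left hharm (by positivity)
    have hlogk : Real.log r₀ - Real.log (Real.sqrt d) ≤ Real.log k := by
      rw [← Real.log_div (ne_of_gt hr₀pos) (ne_of_gt hsd0)]
      exact Real.log_le_log (by positivity) hkr
    have hXeq : Real.log (Real.sqrt d * N / r₀)
        = Real.log (Real.sqrt d) + Real.log N - Real.log r₀ := by
      rw [Real.log_div (by positivity) (ne_of_gt hr₀pos),
        Real.log_mul (ne_of_gt hsd0) (ne_of_gt hN0)]
    have hfin : 1 + Real.log N - Real.log k
        ≤ (1 + 1 / Real.log 2) * Real.log (2 * Real.sqrt d * N / r₀) := by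
      rw [hLeq]
      have hone : (1 / Real.log 2) * Real.log 2 = 1 := by field_simp
      have ha : (0:ℝ) ≤ 1 / Real.log 2 := by positivity
      nlinarith [mul_nonneg ha hX]
    rw [Nat.cast_pow]
    calc ∑ i ∈ A, ((∑ j, 4 * Real.sin (Real.pi * (i j : ℕ) / (2 * N)) ^ 2) ^ m)⁻¹
        ≤ (N : ℝ) ^ (2*m) * ∑ t ∈ Finset.range N, bfun t := key
      _ ≤ (N : ℝ) ^ (2*m) * ((d:ℝ) * 2 ^ (d-1) * (1 + Real.log N - Real.log k)) :=
          mul_le_mul_of_nonneg_left hsumb (by positivity)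
      _ ≤ (N : ℝ) ^ (2*m) * ((d:ℝ) * 2 ^ (d-1) *
            ((1 + 1 / Real.log 2) * Real.log (2 * Real.sqrt d * N / r₀))) := by
          apply mul_le_mul_of_nonneg_left _ (by positivity)
          apply mul_le_mul_of_nonneg_left hfin (by positivity)
      _ = c2 * (N : ℝ) ^ d * Real.log (2 * Real.sqrt d * N / r₀) := by
          rw [hc2, ← hcase]
          ring
      _ ≤ max c1 (max c2 c3) * (N:ℝ) ^ d * Real.log (2 * Real.sqrt d * N / r₀) := by
          apply mul_le_mul_of_nonneg_right _ hLpos.le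
          apply mul_le_mul_of_nonneg_right _ (by positivity)
          exact le_trans (le_max_left c2 c3) (le_max_right c1 _)
  · -- Case d < 2m
    intro hcase
    have hrpow_nn : (0:ℝ) ≤ r₀ ^ ((d : ℝ) - 2*m) := Real.rpow_nonneg hr₀pos.le _
    have hbb : ∀ t ∈ Finset.range N, bfun t ≤
        ((d:ℝ) * 2 ^ (d-1) * (((k:ℝ)) ^ (2*m - d - 1))⁻¹) *
          (if 1 ≤ t ∧ r₀ ≤ Real.sqrt d * t then (((t:ℝ)) ^ 2)⁻¹ else 0) := by
      intro t _
      rw [hbfun]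
      simp only
      split_ifs with hcnd
      · have hkt : k ≤ t := max_le hcnd.1 (by
          rw [Nat.ceil_le, div_le_iff₀ hsd0, mul_comm]
          exact hcnd.2)
        have hktR : (k:ℝ) ≤ (t:ℝ) := by exact_mod_cast hkt
        have ht1 : (1:ℝ) ≤ (t:ℝ) := by exact_mod_cast hcnd.1
        have ht0 : (0:ℝ) < (t:ℝ) := by linarith
        have e1 : ((t:ℝ) + 1) ^ (d-1) ≤ 2 ^ (d-1) * (t:ℝ) ^ (d-1) := by
          rw [← mul_pow]
          exact pow_le_pow_left₀ (by positivity) (by linarith) _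
        have e2 : (t:ℝ) ^ (d-1) * (((t:ℝ)) ^ (2*m))⁻¹
            = (((t:ℝ)) ^ 2)⁻¹ * (((t:ℝ)) ^ (2*m - d - 1))⁻¹ := by
          have h1 : ((t:ℝ)) ^ (2*m) = (t:ℝ) ^ (d-1) * ((t:ℝ) ^ 2 * (t:ℝ) ^ (2*m - d - 1)) := by
            rw [← pow_add, ← pow_add]
            congr 1
            omega
          rw [h1, mul_inv, ← mul_assoc,
            mul_inv_cancel₀ (by positivity : ((t:ℝ)) ^ (d-1) ≠ 0), one_mul, mul_inv]
        have e3 : (((t:ℝ)) ^ (2*m - d - 1))⁻¹ ≤ (((k:ℝ)) ^ (2*m - d - 1))⁻¹ := by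
          apply inv_anti₀ (by positivity)
          exact pow_le_pow_left₀ (by positivity) hktR _
        calc (d:ℝ) * ((t:ℝ) + 1) ^ (d-1) * (((t:ℝ)) ^ (2*m))⁻¹
            ≤ (d:ℝ) * (2 ^ (d-1) * (t:ℝ) ^ (d-1)) * (((t:ℝ)) ^ (2*m))⁻¹ := by
              apply mul_le_mul_of_nonneg_right
                (mul_le_mul_of_nonneg_left e1 (by positivity)) (by positivity)
          _ = (d:ℝ) * 2 ^ (d-1) * ((t:ℝ) ^ (d-1) * (((t:ℝ)) ^ (2*m))⁻¹) := by ring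
          _ = (d:ℝ) * 2 ^ (d-1) * ((((t:ℝ)) ^ 2)⁻¹ * (((t:ℝ)) ^ (2*m - d - 1))⁻¹) := by
              rw [e2]
          _ ≤ (d:ℝ) * 2 ^ (d-1) * ((((t:ℝ)) ^ 2)⁻¹ * (((k:ℝ)) ^ (2*m - d - 1))⁻¹) := by
              apply mul_le_mul_of_nonneg_left _ (by positivity)
              exact mul_le_mul_of_nonneg_left e3 (by positivity)
          _ = ((d:ℝ) * 2 ^ (d-1) * (((k:ℝ)) ^ (2*m - d - 1))⁻¹) * (((t:ℝ)) ^ 2)⁻¹ := by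
              ring
      · simp
    have hsumb : ∑ t ∈ Finset.range N, bfun t
        ≤ (d:ℝ) * 2 ^ (d-1) * 2 * (((k:ℝ)) ^ (2*m - d))⁻¹ := by
      calc ∑ t ∈ Finset.range N, bfun t
          ≤ ∑ t ∈ Finset.range N, ((d:ℝ) * 2 ^ (d-1) * (((k:ℝ)) ^ (2*m - d - 1))⁻¹) *
              (if 1 ≤ t ∧ r₀ ≤ Real.sqrt d * t then (((t:ℝ)) ^ 2)⁻¹ else 0) :=
            Finset.sum_le_sum hbb
        _ = ((d:ℝ) * 2 ^ (d-1) * (((k:ℝ)) ^ (2*m - d - 1))⁻¹) * ∑ t ∈ Finset.range N,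
              (if 1 ≤ t ∧ r₀ ≤ Real.sqrt d * t then (((t:ℝ)) ^ 2)⁻¹ else 0) := by
            rw [Finset.mul_sum]
        _ ≤ ((d:ℝ) * 2 ^ (d-1) * (((k:ℝ)) ^ (2*m - d - 1))⁻¹) * (2 * ((k:ℝ))⁻¹) := by
            apply mul_le_mul_of_nonneg_left _ (by positivity)
            exact le_trans (hsum_if _ (fun t => by positivity)) hsqsum
        _ = (d:ℝ) * 2 ^ (d-1) * 2 * (((k:ℝ)) ^ (2*m - d))⁻¹ := by
            have h1 : ((k:ℝ)) ^ (2*m - d) = (k:ℝ) ^ (2*m - d - 1) * (k:ℝ) := by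
              rw [← pow_succ]
              congr 1
              omega
            rw [h1, mul_inv]
            ring
    have hfin : (((k:ℝ)) ^ (2*m - d))⁻¹ ≤ (Real.sqrt d) ^ (2*m) * r₀ ^ ((d : ℝ) - 2*m) := by
      have h1 : (r₀ / Real.sqrt d) ^ (2*m - d) ≤ ((k:ℝ)) ^ (2*m - d) :=
        pow_le_pow_left₀ (by positivity) hkr _
      have h2 : (((k:ℝ)) ^ (2*m - d))⁻¹ ≤ ((r₀ / Real.sqrt d) ^ (2*m - d))⁻¹ :=
        inv_anti₀ (by positivity) h1
      have h3 : ((r₀ / Real.sqrt d) ^ (2*m - d))⁻¹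
          = (Real.sqrt d) ^ (2*m - d) * (r₀ ^ (2*m - d))⁻¹ := by
        rw [div_pow, inv_div, div_eq_mul_inv]
      have h4 : (r₀ ^ (2*m - d))⁻¹ = r₀ ^ ((d : ℝ) - 2*m) := by
        rw [show ((d:ℝ) - 2*m) = -(((2*m - d : ℕ)):ℝ) by
          rw [Nat.cast_sub (by omega)]; push_cast; ring]
        rw [Real.rpow_neg hr₀pos.le, Real.rpow_natCast]
      have h5 : (Real.sqrt d) ^ (2*m - d) ≤ (Real.sqrt d) ^ (2*m) :=
        pow_le_pow_right₀ hsd1 (by omega)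
      calc (((k:ℝ)) ^ (2*m - d))⁻¹ ≤ ((r₀ / Real.sqrt d) ^ (2*m - d))⁻¹ := h2
        _ = (Real.sqrt d) ^ (2*m - d) * (r₀ ^ (2*m - d))⁻¹ := h3
        _ = (Real.sqrt d) ^ (2*m - d) * r₀ ^ ((d : ℝ) - 2*m) := by rw [h4]
        _ ≤ (Real.sqrt d) ^ (2*m) * r₀ ^ ((d : ℝ) - 2*m) :=
            mul_le_mul_of_nonneg_right h5 hrpow_nn
    calc ∑ i ∈ A, ((∑ j, 4 * Real.sin (Real.pi * (i j : ℕ) / (2 * N)) ^ 2) ^ m)⁻¹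
        ≤ (N : ℝ) ^ (2*m) * ∑ t ∈ Finset.range N, bfun t := key
      _ ≤ (N : ℝ) ^ (2*m) * ((d:ℝ) * 2 ^ (d-1) * 2 * (((k:ℝ)) ^ (2*m - d))⁻¹) :=
          mul_le_mul_of_nonneg_left hsumb (by positivity)
      _ ≤ (N : ℝ) ^ (2*m) * ((d:ℝ) * 2 ^ (d-1) * 2 *
            ((Real.sqrt d) ^ (2*m) * r₀ ^ ((d : ℝ) - 2*m))) := by
          apply mul_le_mul_of_nonneg_left _ (by positivity)
          apply mul_le_mul_of_nonneg_left hfin (by positivity)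
      _ = c3 * (N : ℝ) ^ (2*m) * r₀ ^ ((d : ℝ) - 2*m) := by
          rw [hc3]; ring
      _ ≤ max c1 (max c2 c3) * (N : ℝ) ^ (2*m) * r₀ ^ ((d : ℝ) - 2*m) := by
          apply mul_le_mul_of_nonneg_right _ hrpow_nn
          apply mul_le_mul_of_nonneg_right _ (by positivity)
          exact le_trans (le_max_right c2 c3) (le_max_right c1 _)
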